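/- The ideal G_fc of graphs with finite chromatic number contains no cotowers: for every regular uncountable κ and every ⊆*-increasing sequence (E_α)_{α<κ} in G_fc there is an infinite B ⊆ [ω]² with E_α ∩ B finite for all α < κ. -/

import Mathlib

open Set Cardinal

/-- The set of unordered pairs of distinct naturals, i.e. [ω]². -/
def Edges : Set (Sym2 ℕ) := {e | ¬ e.IsDiag}

/-- The ideal of graphs with finite chromatic number. -/
def Gfc : Set (Set (Sym2 ℕ)) :=
  {E | E ⊆ Edges ∧ ∃ (m : ℕ) (c : ℕ → Fin m),
    ∀ x y : ℕ, x ≠ y → Sym2.mk x y ∈ E → c x ≠ c y}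

theorem stmt8 (κ : Cardinal) (hreg : κ.IsRegular) (hunc : Cardinal.aleph0 < κ)
    (E : Ordinal → Set (Sym2 ℕ))
    (hmem : ∀ α < κ.ord, E α ∈ Gfc)
    (hmono : ∀ β α, β ≤ α → α < κ.ord → (E β \ E α).Finite) :
    ∃ B : Set (Sym2 ℕ), B ⊆ Edges ∧ B.Infinite ∧
      ∀ α < κ.ord, (E α ∩ B).Finite := by
  by_contra hcon
  push_neg at hcon
  -- Step 1: every "star" is hit infinitely by some E α.
  have star : ∀ (v : ℕ) (Y : Set ℕ), Y.Infinite →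
      ∃ β, β < κ.ord ∧ {y | y ∈ Y ∧ y ≠ v ∧ Sym2.mk v y ∈ E β}.Infinite := by
    intro v Y hY
    have hinj : Set.InjOn (fun y => Sym2.mk v y) (Y \ {v}) := by
      intro a ha b hb hab
      simp only [Sym2.eq_iff] at hab
      rcases hab with ⟨-, h⟩ | ⟨h1, h2⟩
      · exact h
      · exact absurd h2 ha.2
    have hBsub : (fun y => Sym2.mk v y) '' (Y \ {v}) ⊆ Edges := by
      rintro e ⟨y, hy, rfl⟩
      simp only [Edges, Set.mem_setOf_eq, Sym2.isDiag_iff_proj_eq]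
      exact fun h => hy.2 h.symm
    have hBinf : ((fun y => Sym2.mk v y) '' (Y \ {v})).Infinite :=
      (hY.diff (Set.finite_singleton v)).image hinj
    obtain ⟨β, hβ, hinf⟩ := hcon _ hBsub hBinf
    refine ⟨β, hβ, ?_⟩
    apply Set.Infinite.of_image (fun y => Sym2.mk v y)
    apply Set.Infinite.mono (s := E β ∩ ((fun y => Sym2.mk v y) '' (Y \ {v})))
    · rintro e ⟨heE, y, hy, rfl⟩
      exact ⟨y, ⟨hy.1, fun h => hy.2 h, heE⟩, rfl⟩
    · exact hinf
  choose βf hβf hSf using star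
  -- Step 2: build the sequence of vertices and ordinals.
  let vf : {Y : Set ℕ // Y.Infinite} → ℕ := fun Y => Y.2.nonempty.some
  let bf : {Y : Set ℕ // Y.Infinite} → Ordinal := fun Y => βf (vf Y) Y.1 Y.2
  let next : {Y : Set ℕ // Y.Infinite} → {Y : Set ℕ // Y.Infinite} :=
    fun Y => ⟨{y | y ∈ Y.1 ∧ y ≠ vf Y ∧ Sym2.mk (vf Y) y ∈ E (bf Y)}, hSf (vf Y) Y.1 Y.2⟩
  let seq : ℕ → {Y : Set ℕ // Y.Infinite} := fun n => next^[n] ⟨Set.univ, Set.infinite_univ⟩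
  let v : ℕ → ℕ := fun i => vf (seq i)
  let β : ℕ → Ordinal := fun i => bf (seq i)
  have hseqsucc : ∀ i, seq (i + 1) = next (seq i) := fun i =>
    Function.iterate_succ_apply' next i _
  have hsub1 : ∀ i, (seq (i + 1)).1 ⊆ (seq i).1 := by
    intro i
    rw [hseqsucc]
    exact fun y hy => hy.1
  have hchain : ∀ i j, i ≤ j → (seq j).1 ⊆ (seq i).1 := by
    intro i j hij
    induction j, hij using Nat.le_induction with
    | base => exact subset_rfl
    | succ n hn ih => exact (hsub1 n).trans ih
  have hkey : ∀ i j, i < j → v j ≠ v i ∧ Sym2.mk (v i) (v j) ∈ E (β i) := by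
    intro i j hij
    have hvj : v j ∈ (seq j).1 := (seq j).2.nonempty.some_mem
    have hvj' : v j ∈ (seq (i + 1)).1 := hchain (i + 1) j hij hvj
    rw [hseqsucc] at hvj'
    exact ⟨hvj'.2.1, hvj'.2.2⟩
  have hβlt : ∀ i, β i < κ.ord := fun i => hβf _ _ _
  -- Step 3: take the sup and get a finite coloring.
  set γ : Ordinal := ⨆ i, β i with hγdef
  have hγ : γ < κ.ord := by
    apply Cardinal.iSup_lt_ord_lift_of_isRegular hreg _ hβlt
    simpa using hunc
  have hle : ∀ i, β i ≤ γ := Ordinal.le_iSup β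
  obtain ⟨-, m, c, hc⟩ := hmem γ hγ
  have vinj : ∀ i j, i ≠ j → v i ≠ v j := by
    intro i j hij
    rcases hij.lt_or_gt with h | h
    · exact ((hkey i j h).1).symm
    · exact (hkey j i h).1
  -- Step 4: bad sets are finite.
  have hbadfin : ∀ i, {j | i < j ∧ Sym2.mk (v i) (v j) ∈ E (β i) \ E γ}.Finite := by
    intro i
    apply Set.Finite.of_finite_image (f := fun j => Sym2.mk (v i) (v j))
    · apply Set.Finite.subset (hmono (β i) γ (hle i) hγ)
      rintro e ⟨j, hj, rfl⟩
      exact hj.2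
    · intro a ha b hb hab
      simp only [Sym2.eq_iff] at hab
      rcases hab with ⟨-, h⟩ | ⟨h1, h2⟩
      · by_contra hne
        exact vinj a b hne h
      · exact absurd h2 (hkey i a ha.1).1
  -- Step 5: build cliques of any size in E γ.
  have clique : ∀ n : ℕ, ∃ s : Finset ℕ, s.card = n ∧
      ∀ i ∈ s, ∀ j ∈ s, i < j → Sym2.mk (v i) (v j) ∈ E γ := by
    intro n
    induction n with
    | zero => exact ⟨∅, rfl, by simp⟩
    | succ n ih =>
      obtain ⟨s, hcard, hs⟩ := ih
      have hfin : (Set.Iic (s.sup id) ∪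
          ⋃ i ∈ (s : Set ℕ), {j | i < j ∧ Sym2.mk (v i) (v j) ∈ E (β i) \ E γ}).Finite :=
        (Set.finite_Iic _).union (s.finite_toSet.biUnion fun i _ => hbadfin i)
      obtain ⟨j, hj⟩ := hfin.infinite_compl.nonempty
      rw [Set.mem_compl_iff, Set.mem_union] at hj
      push_neg at hj
      obtain ⟨hj1, hj2⟩ := hj
      simp only [Set.mem_iUnion, Set.mem_setOf_eq, not_exists, not_and,
        Finset.mem_coe] at hj2
      have hj1' : s.sup id < j := not_le.1 (by simpa using hj1)
      have hjgt : ∀ i ∈ s, i < j := fun i hi =>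
        lt_of_le_of_lt (Finset.le_sup (f := id) hi) hj1'
      have hjs : j ∉ s := fun h => absurd (hjgt j h) (lt_irrefl j)
      refine ⟨insert j s, by rw [Finset.card_insert_of_notMem hjs, hcard], ?_⟩
      intro a ha b hb hab
      rcases Finset.mem_insert.1 ha with rfl | ha' <;>
        rcases Finset.mem_insert.1 hb with rfl | hb'
      · exact absurd hab (lt_irrefl _)
      · exact absurd (hjgt b hb') (not_lt_of_gt hab)
      · -- a ∈ s, b = j
        have hedge := (hkey a b (hjgt a ha')).2
        by_contra hng
        exact hj2 a ha' (hjgt a ha') ⟨hedge, hng⟩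
      · exact hs a ha' b hb' hab
  -- Step 6: pigeonhole on the (m+1)-clique.
  obtain ⟨s, hcard, hs⟩ := clique (m + 1)
  have hlt : (Finset.univ : Finset (Fin m)).card < s.card := by
    rw [hcard, Finset.card_univ, Fintype.card_fin]
    exact Nat.lt_succ_self m
  obtain ⟨a, ha, b, hb, hab, heq⟩ :=
    Finset.exists_ne_map_eq_of_card_lt_of_maps_to hlt
      (f := fun i => c (v i)) (fun i _ => Finset.mem_univ _)
  rcases hab.lt_or_gt with h | h
  · exact hc (v a) (v b) ((hkey a b h).1).symm (hs a ha b hb h) heq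
  · exact hc (v b) (v a) ((hkey b a h).1).symm (hs b hb a ha h) heq.symm
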